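/- arXiv:2503.13001 — 3 statements merged into one kernel-verified Lean document; each statement's English description precedes it below -/
import Mathlib

section
/- Let u₁, u₂ ∈ ℝ² be linearly independent vectors, let L := (ℝ·u₁) ∪ (ℝ·u₂) be the union of the two corresponding lines through the origin, and let f : ℝ² → ℝ be continuous such that for every connected component C of ℝ² \ L there is a linear function g_C : ℝ² → ℝ with f = g_C on C. Then there exist functions f₁, f₂ : ℝ² → ℝ, each CPL with at most 3 pieces, such that f = f₁ + f₂. -/
open Set
open Filter Topology

noncomputable section

/-- The plane `ℝ²`, modeled as functions `Fin 2 → ℝ`. -/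
abbrev E2 := Fin 2 → ℝ

/-- `f : ℝ² → ℝ` is affine: `f x = ⟨a, x⟩ + b`. -/
def IsAffineFn (f : E2 → ℝ) : Prop :=
  ∃ (a : E2) (b : ℝ), ∀ x, f x = dotProduct a x + b

/-- `f : ℝ² → ℝ` is linear: `f x = ⟨a, x⟩`. -/
def IsLinearFn (f : E2 → ℝ) : Prop :=
  ∃ a : E2, ∀ x, f x = dotProduct a x

/-- An affine line in the plane. -/
def IsLine (l : Set E2) : Prop :=
  ∃ v u : E2, u ≠ 0 ∧ l = {x | ∃ t : ℝ, x = v + t • u}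

/-- A polygonal piece: a regular closed set with nonempty connected interior whose
frontier is contained in a finite union of affine lines. -/
def IsPolygonalPiece (P : Set E2) : Prop :=
  IsClosed P ∧ (interior P).Nonempty ∧ IsConnected (interior P) ∧
    P = closure (interior P) ∧
    ∃ (m : ℕ) (L : Fin m → Set E2), (∀ i, IsLine (L i)) ∧ frontier P ⊆ ⋃ i, L i

/-- `Ps` is an admissible family of pieces for `f`. -/
def IsAdmissible (f : E2 → ℝ) (Ps : Finset (Set E2)) : Prop :=
  (∀ P ∈ Ps, IsPolygonalPiece P) ∧
  (⋃ P ∈ Ps, P) = univ ∧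
  (∀ P ∈ Ps, ∀ Q ∈ Ps, P ≠ Q → P ∩ Q = frontier P ∩ frontier Q) ∧
  (∀ P ∈ Ps, ∃ g : E2 → ℝ, IsAffineFn g ∧ EqOn f g P)

/-- `f` is continuous piecewise affine with (at most) `p` pieces. -/
def IsCPA (p : ℕ) (f : E2 → ℝ) : Prop :=
  Continuous f ∧ ∃ Ps : Finset (Set E2), Ps.card ≤ p ∧ IsAdmissible f Ps

/-- `P` is a cone with apex `v`. -/
def IsConeWithApex (v : E2) (P : Set E2) : Prop :=
  ∀ x ∈ P, ∀ t : ℝ, 0 ≤ t → v + t • (x - v) ∈ P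

/-- A `v`-function with (at most) `p` pieces: a CPA function admitting an admissible
family of pieces all of which are cones with apex `v`. -/
def IsVFunction (v : E2) (p : ℕ) (f : E2 → ℝ) : Prop :=
  Continuous f ∧ ∃ Ps : Finset (Set E2), Ps.card ≤ p ∧ IsAdmissible f Ps ∧
    ∀ P ∈ Ps, IsConeWithApex v P

/-- A CPL function with (at most) `p` pieces: a `0`-function whose affine components
are linear. -/
def IsCPL (p : ℕ) (f : E2 → ℝ) : Prop :=
  Continuous f ∧ ∃ Ps : Finset (Set E2), Ps.card ≤ p ∧ IsAdmissible f Ps ∧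
    (∀ P ∈ Ps, IsConeWithApex 0 P) ∧
    ∀ P ∈ Ps, ∃ g : E2 → ℝ, IsLinearFn g ∧ EqOn f g P

/-- Componentwise ReLU. -/
def relu {n : ℕ} (x : Fin n → ℝ) : Fin n → ℝ := fun i => max 0 (x i)

lemma dot_cont (w : E2) : Continuous fun x : E2 => dotProduct w x := by
  simp only [dotProduct]
  exact continuous_finset_sum _ fun i _ => continuous_const.mul (continuous_apply i)

lemma dot_linear (w : E2) : IsLinearMap ℝ fun x : E2 => dotProduct w x :=
  ⟨fun x y => dotProduct_add w x y, fun c x => dotProduct_smul c w x⟩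

lemma dot_rep (φ : E2 →ₗ[ℝ] ℝ) : ∃ w : E2, ∀ x, φ x = dotProduct w x := by
  refine ⟨fun i => φ fun j => if i = j then 1 else 0, fun x => ?_⟩
  rw [φ.pi_apply_eq_sum_univ x, dotProduct]
  exact Finset.sum_congr rfl fun i _ => by simp [mul_comm]

lemma halfplane_facts (w u : E2) (hu : u ≠ 0) (x₀ : E2) (hx₀ : dotProduct w x₀ = 1)
    (hker : ∀ x, dotProduct w x = 0 → ∃ t : ℝ, x = t • u) :
    IsPolygonalPiece {x : E2 | 0 ≤ dotProduct w x} ∧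
    frontier {x : E2 | 0 ≤ dotProduct w x} = {x : E2 | dotProduct w x = 0} ∧
    interior {x : E2 | 0 ≤ dotProduct w x} = {x : E2 | 0 < dotProduct w x} := by
  set s := fun x : E2 => dotProduct w x with hs
  set P := {x : E2 | 0 ≤ s x} with hPdef
  have hscont : Continuous s := dot_cont w
  have hPc : IsClosed P := isClosed_le continuous_const hscont
  have hint : interior P = {x : E2 | 0 < s x} := by
    apply Subset.antisymm
    · intro x hx
      have hnb : P ∈ 𝓝 x := mem_interior_iff_mem_nhds.1 hx
      have hT : Tendsto (fun ε : ℝ => x - ε • x₀) (𝓝[>] 0) (𝓝 x) := by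
        have hc : Continuous fun ε : ℝ => x - ε • x₀ :=
          continuous_const.sub (continuous_id.smul continuous_const)
        have := hc.tendsto 0
        simpa using this.mono_left nhdsWithin_le_nhds
      have hev : ∀ᶠ ε : ℝ in 𝓝[>] 0, (x - ε • x₀) ∈ P := hT.eventually_mem hnb
      obtain ⟨ε, hεP, hεpos⟩ := (hev.and self_mem_nhdsWithin).exists
      have h2 : 0 ≤ s x - ε := by
        have h3 : 0 ≤ s (x - ε • x₀) := hεP
        simp only [hs, dotProduct_sub, dotProduct_smul, hx₀, smul_eq_mul,
          mul_one] at h3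
        simpa [hs] using h3
      show 0 < s x
      linarith
    · exact interior_maximal (fun x (hx : 0 < s x) => (le_of_lt hx : 0 ≤ s x)) (isOpen_lt continuous_const hscont)
  have hclos : closure {x : E2 | 0 < s x} = P := by
    apply Subset.antisymm
    · exact closure_minimal (fun x (hx : 0 < s x) => (le_of_lt hx : 0 ≤ s x)) hPc
    · intro x hx
      have hT : Tendsto (fun ε : ℝ => x + ε • x₀) (𝓝[>] 0) (𝓝 x) := by
        have hc : Continuous fun ε : ℝ => x + ε • x₀ :=
          continuous_const.add (continuous_id.smul continuous_const)
        have := hc.tendsto 0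
        simpa using this.mono_left nhdsWithin_le_nhds
      refine mem_closure_of_tendsto hT ?_
      filter_upwards [self_mem_nhdsWithin] with ε hε
      have hxP : 0 ≤ s x := hx
      show 0 < s (x + ε • x₀)
      have h4 : s (x + ε • x₀) = s x + ε := by
        simp only [hs, dotProduct_add, dotProduct_smul, hx₀, smul_eq_mul, mul_one]
      have : (0:ℝ) < ε := hε
      rw [h4]; linarith
  have hfr : frontier P = {x : E2 | s x = 0} := by
    rw [frontier, hPc.closure_eq, hint]
    ext x
    simp only [mem_diff, mem_setOf_eq]
    constructor
    · rintro ⟨(h1 : 0 ≤ s x), h2⟩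
      rcases lt_or_eq_of_le h1 with h | h
      · exact absurd h h2
      · exact h.symm
    · rintro (h : s x = 0)
      exact ⟨(le_of_eq h.symm : 0 ≤ s x), by simp [h]⟩
  have hx₀pos : (0:ℝ) < s x₀ := by
    show (0:ℝ) < dotProduct w x₀
    rw [hx₀]; norm_num
  refine ⟨⟨hPc, ⟨x₀, by rw [hint]; exact hx₀pos⟩, ⟨⟨x₀, by rw [hint]; exact hx₀pos⟩,
    by rw [hint]; exact (convex_halfSpace_gt (dot_linear w) 0).isPreconnected⟩,
    by rw [hint, hclos], 1, (fun _ => {x | ∃ t : ℝ, x = (0:E2) + t • u}),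
    fun _ => ⟨0, u, hu, rfl⟩, ?_⟩, hfr, hint⟩
  intro x hx
  rw [hfr] at hx
  obtain ⟨t, ht⟩ := hker x hx
  exact mem_iUnion.2 ⟨0, t, by simpa using ht⟩

lemma isAffine_of_isLinear {g : E2 → ℝ} (h : IsLinearFn g) : IsAffineFn g := by
  obtain ⟨a, ha⟩ := h
  exact ⟨a, 0, fun x => by rw [ha x, add_zero]⟩

lemma isLinear_scaled (a : ℝ) (w : E2) : IsLinearFn fun x => a * dotProduct w x := by
  refine ⟨a • w, fun x => ?_⟩
  rw [smul_dotProduct]; rfl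

lemma cpl_of_two_halfplanes (w u x₀ : E2) (hu : u ≠ 0) (hx₀ : dotProduct w x₀ = 1)
    (hker : ∀ x, dotProduct w x = 0 → ∃ t : ℝ, x = t • u) (a b : ℝ) :
    IsCPL 3 (fun x => a * max (dotProduct w x) 0 + b * min (dotProduct w x) 0) := by
  set s := fun x : E2 => dotProduct w x with hs
  set f := fun x => a * max (s x) 0 + b * min (s x) 0 with hf
  have hscont : Continuous s := dot_cont w
  have hfc : Continuous f := (continuous_const.mul (hscont.max continuous_const)).add
    (continuous_const.mul (hscont.min continuous_const))
  have hker' : ∀ x, dotProduct (-w) x = 0 → ∃ t : ℝ, x = t • u := by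
    intro x hx
    apply hker
    rw [neg_dotProduct] at hx
    linarith
  have hx₀' : dotProduct (-w) (-x₀) = 1 := by
    rw [neg_dotProduct, dotProduct_neg, hx₀, neg_neg]
  obtain ⟨hP, hPfr, hPint⟩ := halfplane_facts w u hu x₀ hx₀ hker
  obtain ⟨hQ, hQfr, hQint⟩ := halfplane_facts (-w) u hu (-x₀) hx₀' hker'
  set P := {x : E2 | 0 ≤ dotProduct w x} with hPdef
  set Q := {x : E2 | 0 ≤ dotProduct (-w) x} with hQdef
  have hQs : Q = {x : E2 | s x ≤ 0} := by
    ext x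
    show 0 ≤ dotProduct (-w) x ↔ s x ≤ 0
    rw [neg_dotProduct, neg_nonneg]
  have hQfr' : frontier Q = {x : E2 | s x = 0} := by
    rw [hQfr]
    ext x
    show dotProduct (-w) x = 0 ↔ s x = 0
    rw [neg_dotProduct, neg_eq_zero]
  have hPfr' : frontier P = {x : E2 | s x = 0} := hPfr
  have hPQ : P ∩ Q = {x : E2 | s x = 0} := by
    rw [hQs]
    ext x
    simp only [hPdef, mem_inter_iff, mem_setOf_eq, hs]
    constructor
    · rintro ⟨h1, h2⟩; linarith
    · intro h; constructor <;> linarith [h]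
  have hPmem : ∀ x : E2, 0 ≤ s x → x ∈ P := fun x hx => hx
  have hQmem : ∀ x : E2, s x ≤ 0 → x ∈ Q := fun x hx => by rw [hQs]; exact hx
  have hfP : EqOn f (fun x => a * s x) P := by
    intro x hx
    have hx' : 0 ≤ s x := hx
    simp only [hf, max_eq_left hx', min_eq_right hx', mul_zero, add_zero]
  have hfQ : EqOn f (fun x => b * s x) Q := by
    intro x hx
    have hx' : s x ≤ 0 := by rw [hQs] at hx; exact hx
    simp only [hf, max_eq_right hx', min_eq_left hx', mul_zero, zero_add]
  have hconeP : IsConeWithApex 0 P := by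
    intro x hx t ht
    show 0 ≤ dotProduct w (0 + t • (x - 0))
    rw [zero_add, sub_zero, dotProduct_smul, smul_eq_mul]
    exact mul_nonneg ht hx
  have hconeQ : IsConeWithApex 0 Q := by
    intro x hx t ht
    show 0 ≤ dotProduct (-w) (0 + t • (x - 0))
    rw [zero_add, sub_zero, dotProduct_smul, smul_eq_mul]
    exact mul_nonneg ht hx
  classical
  have hmem : ∀ R ∈ ({P, Q} : Finset (Set E2)), R = P ∨ R = Q := by
    intro R hR
    rcases Finset.mem_insert.1 hR with h | h
    · exact Or.inl h
    · exact Or.inr (Finset.mem_singleton.1 h)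
  have hlinP : IsLinearFn fun x => a * s x := isLinear_scaled a w
  have hlinQ : IsLinearFn fun x => b * s x := isLinear_scaled b w
  refine ⟨hfc, {P, Q}, ?_, ⟨?_, ?_, ?_, ?_⟩, ?_, ?_⟩
  · calc ({P, Q} : Finset (Set E2)).card ≤ ({Q} : Finset (Set E2)).card + 1 :=
        Finset.card_insert_le _ _
    _ ≤ 3 := by simp
  · intro R hR; rcases hmem R hR with rfl | rfl
    · exact hP
    · exact hQ
  · apply eq_univ_of_forall
    intro x
    simp only [Finset.mem_insert, Finset.mem_singleton, mem_iUnion, exists_prop]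
    rcases le_total 0 (s x) with h | h
    · exact ⟨P, Or.inl rfl, hPmem x h⟩
    · exact ⟨Q, Or.inr rfl, hQmem x h⟩
  · intro R hR R' hR' hne
    rcases hmem R hR with rfl | rfl <;> rcases hmem R' hR' with rfl | rfl
    · exact absurd rfl hne
    · rw [hPQ, hPfr', hQfr', inter_self]
    · rw [inter_comm, hPQ, hPfr', hQfr', inter_self]
    · exact absurd rfl hne
  · intro R hR; rcases hmem R hR with rfl | rfl
    · exact ⟨_, isAffine_of_isLinear hlinP, hfP⟩
    · exact ⟨_, isAffine_of_isLinear hlinQ, hfQ⟩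
  · intro R hR; rcases hmem R hR with rfl | rfl
    · exact hconeP
    · exact hconeQ
  · intro R hR; rcases hmem R hR with rfl | rfl
    · exact ⟨_, hlinP, hfP⟩
    · exact ⟨_, hlinQ, hfQ⟩

lemma eq_of_limit (f g : E2 → ℝ) (hf : Continuous f) (hg : Continuous g)
    (S : Set E2) (hfg : EqOn f g S) (y z : E2) (hmem : ∀ ε : ℝ, 0 < ε → y + ε • z ∈ S) :
    f y = g y := by
  have hT : Tendsto (fun ε : ℝ => y + ε • z) (𝓝[>] 0) (𝓝 y) := by
    have hc : Continuous fun ε : ℝ => y + ε • z :=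
      continuous_const.add (continuous_id.smul continuous_const)
    have := hc.tendsto 0
    simpa using this.mono_left nhdsWithin_le_nhds
  refine tendsto_nhds_unique_of_eventuallyEq ((hf.tendsto y).comp hT) ((hg.tendsto y).comp hT) ?_
  filter_upwards [self_mem_nhdsWithin] with ε hε
  exact hfg (hmem ε hε)
/-- A continuous function that is piecewise linear on the four sectors
determined by two intersecting lines through the origin is the sum of two CPL functions
with at most three pieces each. -/
theorem cpl_two_lines_decomposition (u₁ u₂ : E2)
    (hind : LinearIndependent ℝ ![u₁, u₂])
    (L : Set E2)
    (hL : L = {y | ∃ t : ℝ, y = t • u₁} ∪ {y | ∃ t : ℝ, y = t • u₂})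
    (f : E2 → ℝ) (hcont : Continuous f)
    (hpieces : ∀ x ∉ L, ∃ g : E2 → ℝ, IsLinearFn g ∧
      EqOn f g (connectedComponentIn Lᶜ x)) :
    ∃ f₁ f₂ : E2 → ℝ, IsCPL 3 f₁ ∧ IsCPL 3 f₂ ∧ ∀ x, f x = f₁ x + f₂ x := by
  classical
  have hcard : Fintype.card (Fin 2) = Module.finrank ℝ E2 := by simp
  set B : Module.Basis (Fin 2) ℝ E2 := basisOfLinearIndependentOfCardEqFinrank hind hcard with hBdef
  have hco : ⇑B = ![u₁, u₂] := coe_basisOfLinearIndependentOfCardEqFinrank hind hcard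
  have hB0 : B 0 = u₁ := by rw [hco]; simp
  have hB1 : B 1 = u₂ := by rw [hco]; simp
  obtain ⟨w₁, hw₁⟩ := dot_rep ((Finsupp.lapply 0).comp (B.repr : E2 →ₗ[ℝ] (Fin 2 →₀ ℝ)))
  obtain ⟨w₂, hw₂⟩ := dot_rep ((Finsupp.lapply 1).comp (B.repr : E2 →ₗ[ℝ] (Fin 2 →₀ ℝ)))
  have hw₁' : ∀ x, B.repr x 0 = dotProduct w₁ x := fun x => by simpa using hw₁ x
  have hw₂' : ∀ x, B.repr x 1 = dotProduct w₂ x := fun x => by simpa using hw₂ x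
  have hdec : ∀ x : E2,
      (dotProduct w₁ x) • u₁ + (dotProduct w₂ x) • u₂ = x := by
    intro x
    have h := B.sum_repr x
    rw [Fin.sum_univ_two, hB0, hB1, hw₁' x, hw₂' x] at h
    exact h
  have h11 : dotProduct w₁ u₁ = 1 := by
    rw [← hw₁' u₁, ← hB0, B.repr_self]; simp
  have h12 : dotProduct w₁ u₂ = 0 := by
    rw [← hw₁' u₂, ← hB1, B.repr_self]; simp
  have h21 : dotProduct w₂ u₁ = 0 := by
    rw [← hw₂' u₁, ← hB0, B.repr_self]; simp
  have h22 : dotProduct w₂ u₂ = 1 := by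
    rw [← hw₂' u₂, ← hB1, B.repr_self]; simp
  have hu₁ : u₁ ≠ 0 := by have := hind.ne_zero 0; simpa using this
  have hu₂ : u₂ ≠ 0 := by have := hind.ne_zero 1; simpa using this
  have hmemL : ∀ x : E2, x ∈ L ↔ (dotProduct w₁ x = 0 ∨ dotProduct w₂ x = 0) := by
    intro x
    rw [hL]
    constructor
    · rintro (⟨t, rfl⟩ | ⟨t, rfl⟩)
      · right; rw [dotProduct_smul, smul_eq_mul, h21, mul_zero]
      · left; rw [dotProduct_smul, smul_eq_mul, h12, mul_zero]
    · rintro (h | h)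
      · right
        refine ⟨dotProduct w₂ x, ?_⟩
        have := hdec x
        rw [h, zero_smul, zero_add] at this
        exact this.symm
      · left
        refine ⟨dotProduct w₁ x, ?_⟩
        have := hdec x
        rw [h, zero_smul, add_zero] at this
        exact this.symm
  have hker₁ : ∀ x, dotProduct w₁ x = 0 → ∃ t : ℝ, x = t • u₂ := by
    intro x h
    refine ⟨dotProduct w₂ x, ?_⟩
    have := hdec x
    rw [h, zero_smul, zero_add] at this
    exact this.symm
  have hker₂ : ∀ x, dotProduct w₂ x = 0 → ∃ t : ℝ, x = t • u₁ := by
    intro x h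
    refine ⟨dotProduct w₁ x, ?_⟩
    have := hdec x
    rw [h, zero_smul, add_zero] at this
    exact this.symm
  -- the key sector computation
  have key : ∀ e₁ e₂ : ℝ, e₁ * e₁ = 1 → e₂ * e₂ = 1 → ∀ x : E2,
      0 < e₁ * dotProduct w₁ x → 0 < e₂ * dotProduct w₂ x →
      f x = dotProduct w₁ x * (e₁ * f (e₁ • u₁)) +
            dotProduct w₂ x * (e₂ * f (e₂ • u₂)) := by
    intro e₁ e₂ he₁ he₂
    have he₁0 : e₁ ≠ 0 := by intro h; rw [h] at he₁; norm_num at he₁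
    have he₂0 : e₂ ≠ 0 := by intro h; rw [h] at he₂; norm_num at he₂
    set S : Set E2 :=
      {x | 0 < e₁ * dotProduct w₁ x} ∩ {x | 0 < e₂ * dotProduct w₂ x} with hSdef
    have hlin1 : IsLinearMap ℝ fun x : E2 => e₁ * dotProduct w₁ x :=
      ⟨fun x y => by rw [dotProduct_add]; ring,
       fun c x => by rw [dotProduct_smul, smul_eq_mul, smul_eq_mul]; ring⟩
    have hlin2 : IsLinearMap ℝ fun x : E2 => e₂ * dotProduct w₂ x :=
      ⟨fun x y => by rw [dotProduct_add]; ring,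
       fun c x => by rw [dotProduct_smul, smul_eq_mul, smul_eq_mul]; ring⟩
    have hconv : Convex ℝ S :=
      (convex_halfSpace_gt hlin1 0).inter (convex_halfSpace_gt hlin2 0)
    have hSsub : S ⊆ Lᶜ := by
      rintro x ⟨hx1, hx2⟩ hxL
      rcases (hmemL x).1 hxL with h | h
      · have hcon : (0:ℝ) < e₁ * dotProduct w₁ x := hx1
        rw [h, mul_zero] at hcon; exact lt_irrefl 0 hcon
      · have hcon : (0:ℝ) < e₂ * dotProduct w₂ x := hx2
        rw [h, mul_zero] at hcon; exact lt_irrefl 0 hcon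
    set p : E2 := e₁ • u₁ + e₂ • u₂ with hpdef
    have hp1 : dotProduct w₁ p = e₁ := by
      rw [hpdef, dotProduct_add, dotProduct_smul, dotProduct_smul,
        smul_eq_mul, smul_eq_mul, h11, h12]; ring
    have hp2 : dotProduct w₂ p = e₂ := by
      rw [hpdef, dotProduct_add, dotProduct_smul, dotProduct_smul,
        smul_eq_mul, smul_eq_mul, h21, h22]; ring
    have hpS : p ∈ S := by
      constructor
      · show 0 < e₁ * dotProduct w₁ p
        rw [hp1, he₁]; norm_num
      · show 0 < e₂ * dotProduct w₂ p
        rw [hp2, he₂]; norm_num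
    obtain ⟨g, hgl, hgeq⟩ := hpieces p (hSsub hpS)
    obtain ⟨wg, hwg⟩ := hgl
    have hgc : Continuous g := by
      have : g = fun x => dotProduct wg x := funext hwg
      rw [this]; exact dot_cont wg
    have hgS : EqOn f g S := fun x hx =>
      hgeq (hconv.isPreconnected.subset_connectedComponentIn hpS hSsub hx)
    have hb1 : f (e₁ • u₁) = g (e₁ • u₁) := by
      apply eq_of_limit f g hcont hgc S hgS (e₁ • u₁) (e₂ • u₂)
      intro ε hε
      constructor
      · show 0 < e₁ * dotProduct w₁ (e₁ • u₁ + ε • e₂ • u₂)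
        rw [dotProduct_add, dotProduct_smul, dotProduct_smul,
          dotProduct_smul, smul_eq_mul, smul_eq_mul, smul_eq_mul, h11, h12]
        nlinarith [he₁]
      · show 0 < e₂ * dotProduct w₂ (e₁ • u₁ + ε • e₂ • u₂)
        rw [dotProduct_add, dotProduct_smul, dotProduct_smul,
          dotProduct_smul, smul_eq_mul, smul_eq_mul, smul_eq_mul, h21, h22]
        nlinarith [he₂]
    have hb2 : f (e₂ • u₂) = g (e₂ • u₂) := by
      apply eq_of_limit f g hcont hgc S hgS (e₂ • u₂) (e₁ • u₁)
      intro ε hε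
      constructor
      · show 0 < e₁ * dotProduct w₁ (e₂ • u₂ + ε • e₁ • u₁)
        rw [dotProduct_add, dotProduct_smul, dotProduct_smul,
          dotProduct_smul, smul_eq_mul, smul_eq_mul, smul_eq_mul, h11, h12]
        nlinarith [he₁]
      · show 0 < e₂ * dotProduct w₂ (e₂ • u₂ + ε • e₁ • u₁)
        rw [dotProduct_add, dotProduct_smul, dotProduct_smul,
          dotProduct_smul, smul_eq_mul, smul_eq_mul, smul_eq_mul, h21, h22]
        nlinarith [he₂]
    have hA : dotProduct wg u₁ = e₁ * f (e₁ • u₁) := by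
      have h1 : g (e₁ • u₁) = e₁ * dotProduct wg u₁ := by
        rw [hwg, dotProduct_smul, smul_eq_mul]
      calc dotProduct wg u₁ = (e₁ * e₁) * dotProduct wg u₁ := by
            rw [he₁]; ring
        _ = e₁ * g (e₁ • u₁) := by rw [h1]; ring
        _ = e₁ * f (e₁ • u₁) := by rw [hb1]
    have hB' : dotProduct wg u₂ = e₂ * f (e₂ • u₂) := by
      have h1 : g (e₂ • u₂) = e₂ * dotProduct wg u₂ := by
        rw [hwg, dotProduct_smul, smul_eq_mul]
      calc dotProduct wg u₂ = (e₂ * e₂) * dotProduct wg u₂ := by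
            rw [he₂]; ring
        _ = e₂ * g (e₂ • u₂) := by rw [h1]; ring
        _ = e₂ * f (e₂ • u₂) := by rw [hb2]
    intro x hx1 hx2
    have hxS : x ∈ S := ⟨hx1, hx2⟩
    have hgx : dotProduct wg x =
        dotProduct w₁ x * dotProduct wg u₁ +
        dotProduct w₂ x * dotProduct wg u₂ := by
      conv_lhs => rw [← hdec x]
      rw [dotProduct_add, dotProduct_smul, dotProduct_smul,
        smul_eq_mul, smul_eq_mul]
    rw [hgS hxS, hwg x, hgx, hA, hB']
  -- the two CPL functions
  set a := f u₁ with ha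
  set b := -(f (-u₁)) with hb
  set c := f u₂ with hc
  set d := -(f (-u₂)) with hd
  refine ⟨fun x => a * max (dotProduct w₁ x) 0 + b * min (dotProduct w₁ x) 0,
          fun x => c * max (dotProduct w₂ x) 0 + d * min (dotProduct w₂ x) 0,
          cpl_of_two_halfplanes w₁ u₂ u₁ hu₂ h11 hker₁ a b,
          cpl_of_two_halfplanes w₂ u₁ u₂ hu₁ h22 hker₂ c d, ?_⟩
  have hcpl1 := cpl_of_two_halfplanes w₁ u₂ u₁ hu₂ h11 hker₁ a b
  have hcpl2 := cpl_of_two_halfplanes w₂ u₁ u₂ hu₁ h22 hker₂ c d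
  have hsum : ∀ x ∈ Lᶜ, f x =
      (a * max (dotProduct w₁ x) 0 + b * min (dotProduct w₁ x) 0) +
      (c * max (dotProduct w₂ x) 0 + d * min (dotProduct w₂ x) 0) := by
    intro x hx
    have hx' : dotProduct w₁ x ≠ 0 ∧ dotProduct w₂ x ≠ 0 := by
      rw [mem_compl_iff, hmemL, not_or] at hx
      exact hx
    rcases hx'.1.lt_or_gt with h1 | h1 <;> rcases hx'.2.lt_or_gt with h2 | h2
    · -- σ < 0, τ < 0 : e₁ = e₂ = -1
      have hk := key (-1) (-1) (by norm_num) (by norm_num) x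
        (by rw [neg_one_mul]; linarith) (by rw [neg_one_mul]; linarith)
      rw [neg_one_smul, neg_one_smul] at hk
      rw [hk, max_eq_right h1.le, min_eq_left h1.le, max_eq_right h2.le, min_eq_left h2.le,
        hb, hd]
      ring
    · -- σ < 0, τ > 0
      have hk := key (-1) 1 (by norm_num) (by norm_num) x
        (by rw [neg_one_mul]; linarith) (by rw [one_mul]; exact h2)
      rw [neg_one_smul, one_smul] at hk
      rw [hk, max_eq_right h1.le, min_eq_left h1.le, max_eq_left h2.le, min_eq_right h2.le,
        hb, hc]
      ring
    · -- σ > 0, τ < 0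
      have hk := key 1 (-1) (by norm_num) (by norm_num) x
        (by rw [one_mul]; exact h1) (by rw [neg_one_mul]; linarith)
      rw [one_smul, neg_one_smul] at hk
      rw [hk, max_eq_left h1.le, min_eq_right h1.le, max_eq_right h2.le, min_eq_left h2.le,
        ha, hd]
      ring
    · -- σ > 0, τ > 0
      have hk := key 1 1 (by norm_num) (by norm_num) x
        (by rw [one_mul]; exact h1) (by rw [one_mul]; exact h2)
      rw [one_smul, one_smul] at hk
      rw [hk, max_eq_left h1.le, min_eq_right h1.le, max_eq_left h2.le, min_eq_right h2.le,
        ha, hc]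
      ring
  -- extend to all of ℝ² by density
  have hF : Continuous fun x =>
      (a * max (dotProduct w₁ x) 0 + b * min (dotProduct w₁ x) 0) +
      (c * max (dotProduct w₂ x) 0 + d * min (dotProduct w₂ x) 0) :=
    hcpl1.1.add hcpl2.1
  have hEq : EqOn f (fun x =>
      (a * max (dotProduct w₁ x) 0 + b * min (dotProduct w₁ x) 0) +
      (c * max (dotProduct w₂ x) 0 + d * min (dotProduct w₂ x) 0)) Lᶜ :=
    fun x hx => hsum x hx
  have hclo := hEq.closure hcont hF
  intro x
  refine hclo ?_
  have hT : Tendsto (fun ε : ℝ => x + ε • (u₁ + u₂)) (𝓝[≠] 0) (𝓝 x) := by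
    have hc : Continuous fun ε : ℝ => x + ε • (u₁ + u₂) :=
      continuous_const.add (continuous_id.smul continuous_const)
    have := hc.tendsto 0
    simpa using this.mono_left nhdsWithin_le_nhds
  have hevgen : ∀ r : ℝ, ∀ᶠ ε in 𝓝[≠] (0:ℝ), ε ≠ r := by
    intro r
    rcases eq_or_ne r 0 with rfl | hr
    · simpa using eventually_mem_nhdsWithin (a := (0:ℝ)) (s := {(0:ℝ)}ᶜ)
    · exact eventually_nhdsWithin_of_eventually_nhds (eventually_ne_nhds (Ne.symm hr))
  refine mem_closure_of_tendsto hT ?_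
  filter_upwards [hevgen (-(dotProduct w₁ x)), hevgen (-(dotProduct w₂ x))]
    with ε hε1 hε2
  rw [mem_compl_iff, hmemL, not_or]
  have hd1 : dotProduct w₁ (x + ε • (u₁ + u₂)) = dotProduct w₁ x + ε := by
    rw [dotProduct_add, dotProduct_smul, dotProduct_add, h11, h12,
      smul_eq_mul]
    ring
  have hd2 : dotProduct w₂ (x + ε • (u₁ + u₂)) = dotProduct w₂ x + ε := by
    rw [dotProduct_add, dotProduct_smul, dotProduct_add, h21, h22,
      smul_eq_mul]
    ring
  constructor
  · rw [hd1]; intro h; apply hε1; linarith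
  · rw [hd2]; intro h; apply hε2; linarith
end
end

section
/- Let f : ℝ² → ℝ be continuous, let 𝒫 be a finite partition of ℝ² (pairwise disjoint nonempty sets whose union is ℝ²), and for each P ∈ 𝒫 let f_P : ℝ² → ℝ be an affine map with f = f_P on P, such that f_P ≠ f_Q whenever P ≠ Q. Then ℝ² = ⋃_{P ∈ 𝒫} closure(interior P), and for every P ∈ 𝒫 one has f = f_P on closure(interior P). -/
open Set

noncomputable section

lemma IsAffineFn.continuous {g : E2 → ℝ} (h : IsAffineFn g) : Continuous g := by
  obtain ⟨a, b, hab⟩ := h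
  have : g = fun x => dotProduct a x + b := funext hab
  rw [this]
  exact ((continuous_finset_sum _ fun i _ => continuous_const.mul (continuous_apply i))).add
    continuous_const

lemma dense_ne_dot {a : E2} (ha : a ≠ 0) (c : ℝ) :
    Dense {x : E2 | dotProduct a x ≠ c} := by
  intro x
  rw [Metric.mem_closure_iff]
  intro ε hε
  by_cases hx : dotProduct a x ≠ c
  · exact ⟨x, hx, by simpa using hε⟩
  · push_neg at hx
    set t : ℝ := ε / (2 * (‖a‖ + 1)) with ht
    have hnorm : (0:ℝ) < ‖a‖ + 1 := by positivity
    have htpos : 0 < t := by positivity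
    refine ⟨x + t • a, ?_, ?_⟩
    · have haa : dotProduct a a ≠ 0 := fun h => ha (dotProduct_self_eq_zero.1 h)
      simp only [mem_setOf_eq, dotProduct_add, dotProduct_smul, smul_eq_mul, hx]
      intro h
      have : t * dotProduct a a = 0 := by linarith
      rcases mul_eq_zero.1 this with h' | h'
      · exact absurd h' (ne_of_gt htpos)
      · exact haa h'
    · rw [dist_self_add_right, norm_smul, Real.norm_eq_abs, abs_of_pos htpos]
      calc t * ‖a‖ < t * (2 * (‖a‖ + 1)) := by
            apply mul_lt_mul_of_pos_left _ htpos
            nlinarith [norm_nonneg a]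
        _ = ε := by rw [ht, div_mul_cancel₀ _ (by positivity)]

/-- For a continuous function agreeing with pairwise distinct affine
maps on the members of a finite partition of the plane, the closures of the interiors of
the members cover the plane, and `f` agrees with the respective affine component on each
such closure. -/
theorem cpa_partition_regularization (f : E2 → ℝ) (hf : Continuous f)
    (Ps : Finset (Set E2))
    (hne : ∀ P ∈ Ps, P.Nonempty)
    (hdisj : ∀ P ∈ Ps, ∀ Q ∈ Ps, P ≠ Q → P ∩ Q = ∅)
    (hcover : (⋃ P ∈ Ps, P) = univ)
    (F : Set E2 → E2 → ℝ)
    (haff : ∀ P ∈ Ps, IsAffineFn (F P))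
    (heq : ∀ P ∈ Ps, EqOn f (F P) P)
    (hdistinct : ∀ P ∈ Ps, ∀ Q ∈ Ps, P ≠ Q → F P ≠ F Q) :
    (⋃ P ∈ Ps, closure (interior P)) = univ ∧
    ∀ P ∈ Ps, EqOn f (F P) (closure (interior P)) := by
  classical
  -- f agrees with F P on closure P
  have heqc : ∀ P ∈ Ps, EqOn f (F P) (closure P) := fun P hP =>
    (heq P hP).closure hf (haff P hP).continuous
  have hpart2 : ∀ P ∈ Ps, EqOn f (F P) (closure (interior P)) := fun P hP =>
    (heqc P hP).mono (closure_mono interior_subset)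
  refine ⟨?_, hpart2⟩
  -- the good open dense set
  set U : Set E2 × Set E2 → Set E2 := fun p =>
    if p.1 = p.2 then univ else {x | F p.1 x ≠ F p.2 x} with hU
  have hUopen : ∀ p ∈ (↑(Ps ×ˢ Ps) : Set (Set E2 × Set E2)), IsOpen (U p) := by
    rintro ⟨P, Q⟩ _
    by_cases h : P = Q
    · simp [hU, h]
    · simp only [hU, if_neg h]
      exact isOpen_ne_fun (haff P (by aesop)).continuous (haff Q (by aesop)).continuous
  have hUdense : ∀ p ∈ (↑(Ps ×ˢ Ps) : Set (Set E2 × Set E2)), Dense (U p) := by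
    rintro ⟨P, Q⟩ hp
    simp only [Finset.coe_product, mem_prod, Finset.mem_coe] at hp
    by_cases h : P = Q
    · simp [hU, h, dense_univ]
    · simp only [hU, if_neg h]
      obtain ⟨a₁, b₁, h₁⟩ := haff P hp.1
      obtain ⟨a₂, b₂, h₂⟩ := haff Q hp.2
      have hFne := hdistinct P hp.1 Q hp.2 h
      by_cases ha : a₁ - a₂ = 0
      · have ha' : a₁ = a₂ := sub_eq_zero.1 ha
        have hb : b₁ ≠ b₂ := by
          intro hb
          exact hFne (funext fun x => by rw [h₁, h₂, ha', hb])
        have : {x : E2 | F P x ≠ F Q x} = univ := by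
          ext x
          simp only [mem_setOf_eq, mem_univ, iff_true]
          rw [h₁, h₂, ha']
          exact fun h => hb (by linarith)
        rw [this]; exact dense_univ
      · have := dense_ne_dot ha (b₂ - b₁)
        refine this.mono ?_
        intro x hx
        simp only [mem_setOf_eq] at hx ⊢
        rw [h₁, h₂]
        intro h
        apply hx
        rw [sub_dotProduct]
        linarith
  have hDense : Dense (⋂ p ∈ (↑(Ps ×ˢ Ps) : Set (Set E2 × Set E2)), U p) :=
    dense_biInter_of_isOpen hUopen (Finset.countable_toSet _) hUdense
  -- the intersection is contained in the union of interiors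
  have hsub : (⋂ p ∈ (↑(Ps ×ˢ Ps) : Set (Set E2 × Set E2)), U p) ⊆ ⋃ P ∈ Ps, interior P := by
    intro x hx
    have hxuniv : x ∈ ⋃ P ∈ Ps, P := by rw [hcover]; exact mem_univ x
    simp only [mem_iUnion, exists_prop] at hxuniv
    obtain ⟨P, hP, hxP⟩ := hxuniv
    simp only [mem_iUnion, exists_prop]
    refine ⟨P, hP, ?_⟩
    by_contra hxi
    -- x ∈ closure Pᶜ
    have hxc : x ∈ closure Pᶜ := by
      rw [closure_compl]
      simpa using hxi
    have hcompl : Pᶜ ⊆ ⋃ Q ∈ Ps.erase P, Q := by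
      intro z hz
      have : z ∈ ⋃ Q ∈ Ps, Q := by rw [hcover]; exact mem_univ z
      simp only [mem_iUnion, exists_prop] at this
      obtain ⟨Q, hQ, hzQ⟩ := this
      have hQP : Q ≠ P := fun h => hz (h ▸ hzQ)
      exact mem_iUnion₂.2 ⟨Q, Finset.mem_erase.2 ⟨hQP, hQ⟩, hzQ⟩
    have : x ∈ ⋃ Q ∈ Ps.erase P, closure Q := by
      have := closure_mono hcompl hxc
      rwa [Finset.closure_biUnion] at this
    simp only [mem_iUnion, exists_prop] at this
    obtain ⟨Q, hQ', hxQ⟩ := this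
    rw [Finset.mem_erase] at hQ'
    obtain ⟨hQP, hQ⟩ := hQ'
    -- F P x = F Q x
    have h1 : f x = F P x := heqc P hP (subset_closure hxP)
    have h2 : f x = F Q x := heqc Q hQ hxQ
    have hxU : x ∈ U (P, Q) := by
      have := mem_iInter₂.1 hx (P, Q)
      apply this
      simp [Finset.mem_product, hP, hQ]
    simp only [hU, if_neg (Ne.symm hQP)] at hxU
    exact hxU (h1 ▸ h2 ▸ rfl)
  -- conclude
  have hDenseT : Dense (⋃ P ∈ Ps, interior P) := hDense.mono hsub
  rw [← Finset.closure_biUnion]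
  exact hDenseT.closure_eq
end
end

section
/- Let u ∈ ℝ² with u ≠ 0, let c ∈ ℝ, and let g₁, g₂ : ℝ² → ℝ be affine functions that agree on the line { x ∈ ℝ² : ⟨u, x⟩ = c }. Define f : ℝ² → ℝ by f(x) = g₁(x) if ⟨u, x⟩ ≤ c and f(x) = g₂(x) if ⟨u, x⟩ > c. Then either f(x) = max(g₁(x), g₂(x)) for all x ∈ ℝ², or f(x) = min(g₁(x), g₂(x)) for all x ∈ ℝ². -/
open Set

noncomputable section

/-- Gluing two affine functions along the line where they agree yields
either their maximum or their minimum. -/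
theorem glue_affine_max_or_min (u : E2) (hu : u ≠ 0) (c : ℝ) (g₁ g₂ : E2 → ℝ)
    (h₁ : IsAffineFn g₁) (h₂ : IsAffineFn g₂)
    (hagree : ∀ x, dotProduct u x = c → g₁ x = g₂ x)
    (f : E2 → ℝ)
    (hf₁ : ∀ x, dotProduct u x ≤ c → f x = g₁ x)
    (hf₂ : ∀ x, c < dotProduct u x → f x = g₂ x) :
    (∀ x, f x = max (g₁ x) (g₂ x)) ∨ (∀ x, f x = min (g₁ x) (g₂ x)) :=  by
  obtain ⟨a₁, b₁, hg₁⟩ := h₁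
  obtain ⟨a₂, b₂, hg₂⟩ := h₂
  set a : E2 := a₁ - a₂ with ha
  have huu : dotProduct u u ≠ 0 := by
    intro h
    exact hu (funext fun i => by
      have := dotProduct_self_eq_zero.mp h
      exact congrFun this i)
  set l : ℝ := dotProduct a u / dotProduct u u with hl
  have key : ∀ x, g₁ x - g₂ x = l * (dotProduct u x - c) := by
    intro x
    set t : ℝ := (dotProduct u x - c) / dotProduct u u with ht
    set y : E2 := x - t • u with hy
    have hyc : dotProduct u y = c := by
      have hsu : dotProduct u (t • u) = t * dotProduct u u := by
        rw [dotProduct_smul, smul_eq_mul]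
      rw [hy, dotProduct_sub, hsu, ht, div_mul_cancel₀ _ huu]
      ring
    have hagy := hagree y hyc
    have hxy : x = y + t • u := by rw [hy]; abel
    have expand : g₁ x - g₂ x = (g₁ y - g₂ y) + t * dotProduct a u := by
      rw [hg₁, hg₂, hg₁, hg₂, hxy]
      simp only [dotProduct_add, dotProduct_smul, ha,
        sub_dotProduct, smul_eq_mul]
      ring
    rw [expand, hagy, sub_self, zero_add, ht, hl]
    field_simp
  rcases le_or_gt 0 l with hpos | hneg
  · right
    intro x
    rcases le_or_gt (dotProduct u x) c with hx | hx
    · have h12 : g₁ x ≤ g₂ x := by nlinarith [key x]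
      rw [hf₁ x hx, min_eq_left h12]
    · have h21 : g₂ x ≤ g₁ x := by nlinarith [key x]
      rw [hf₂ x hx, min_eq_right h21]
  · left
    intro x
    rcases le_or_gt (dotProduct u x) c with hx | hx
    · have h21 : g₂ x ≤ g₁ x := by nlinarith [key x]
      rw [hf₁ x hx, max_eq_left h21]
    · have h12 : g₁ x ≤ g₂ x := by nlinarith [key x]
      rw [hf₂ x hx, max_eq_right h12]
end
end
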